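/- Let r ≥ 4. There exist n ≥ r and an intersecting family 𝒜 ⊆ [n]^(r) with |𝒜⟨1⟩| ≥ 2·C(2r−4, r−2) + 2r − 4, where C(·,·) denotes the binomial coefficient. In particular α^(r) ≥ 2·C(2r−4, r−2) + 2r − 4. (Such a family is obtained by pairing the (r−2)-subsets of [2r−4] into complementary pairs (A_i, B_i), i = 1,…,m with m = C(2r−4,r−2)/2, introducing four new vertices a_i, b_i, c_i, d_i for each i, and taking the r-sets A_i∪{a_i,b_i}, A_i∪{c_i,d_i}, B_i∪{a_i,c_i}, B_i∪{b_i,d_i}.) -/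

import Mathlib

open Finset

/-- The ground set `[n] = {1, …, n}`. -/
def grd (n : ℕ) : Finset ℕ := Finset.Icc 1 n

/-- `[n]^(k)`: all `k`-element subsets of `[n]`. -/
def ksets (n k : ℕ) : Finset (Finset ℕ) := (grd n).powersetCard k

/-- A family of sets is intersecting if any two of its members meet. -/
def IsIntersecting (𝒜 : Finset (Finset ℕ)) : Prop :=
  ∀ A ∈ 𝒜, ∀ B ∈ 𝒜, (A ∩ B).Nonempty

/-- `𝒜⟨k⟩`: the collection of `k`-sets arising as pairwise intersections of members of `𝒜`. -/
def interk (𝒜 : Finset (Finset ℕ)) (k : ℕ) : Finset (Finset ℕ) :=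
  ((𝒜 ×ˢ 𝒜).image fun p => p.1 ∩ p.2).filter fun C => C.card = k

/-- `𝒜⟨1⟩` identified with a set of points: all `x` with `{x} = A ∩ B` for some `A, B ∈ 𝒜`. -/
def interPts (𝒜 : Finset (Finset ℕ)) : Finset ℕ :=
  (interk 𝒜 1).sup id

/-- `β(n,r,k)`: the maximum of `|𝒜⟨k⟩|` over intersecting families `𝒜 ⊆ [n]^(r)`. -/
noncomputable def beta (n r k : ℕ) : ℕ :=
  sSup {m | ∃ 𝒜 ⊆ ksets n r, IsIntersecting 𝒜 ∧ (interk 𝒜 k).card = m}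

/-- `α^(r) = max {β(n,r,1) : n ≥ r}` (finite by Lovász's theorem). -/
noncomputable def alpha (r : ℕ) : ℕ :=
  sSup {m | ∃ n, r ≤ n ∧ beta n r 1 = m}


def HasSunflower (F : Finset (Finset ℕ)) (t : ℕ) : Prop :=
  ∃ P ⊆ F, P.card = t ∧ ∃ Y, ∀ A ∈ P, ∀ B ∈ P, A ≠ B → A ∩ B = Y

lemma sunflower_lemma (t : ℕ) (ht : 1 ≤ t) :
    ∀ w (F : Finset (Finset ℕ)), (∀ A ∈ F, A.card ≤ w) →
      w.factorial * t ^ w < F.card → HasSunflower F t := by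
  intro w
  induction w with
  | zero =>
    intro F hc hlt
    exfalso
    have hF : F ⊆ {∅} := by
      intro A hA
      simp only [mem_singleton]
      exact card_eq_zero.mp (Nat.le_zero.mp (hc A hA))
    have := card_le_card hF
    simp at this hlt
    omega
  | succ w ih =>
    intro F hc hlt
    classical
    -- maximal pairwise disjoint family of nonempty members
    set 𝒟 : Finset (Finset (Finset ℕ)) :=
      F.powerset.filter (fun D => (∀ A ∈ D, A ≠ ∅) ∧
        ∀ A ∈ D, ∀ B ∈ D, A ≠ B → A ∩ B = ∅) with h𝒟
    have hne : 𝒟.Nonempty := ⟨∅, by simp [h𝒟]⟩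
    obtain ⟨D, hD, hDmax⟩ := Finset.exists_max_image 𝒟 card hne
    simp only [h𝒟, mem_filter, mem_powerset] at hD
    obtain ⟨hDF, hDne, hDdisj⟩ := hD
    by_cases hDt : t ≤ D.card
    · obtain ⟨P, hPD, hPcard⟩ := Finset.exists_subset_card_eq hDt
      exact ⟨P, hPD.trans hDF, hPcard, ∅, fun A hA B hB hAB =>
        hDdisj A (hPD hA) B (hPD hB) hAB⟩
    · -- D.card ≤ t - 1
      set U := D.sup id with hU
      have hUcard : U.card ≤ (t - 1) * (w + 1) := by
        calc U.card ≤ ∑ A ∈ D, (id A).card := by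
              rw [hU, sup_eq_biUnion]; exact card_biUnion_le
        _ ≤ ∑ _A ∈ D, (w + 1) := by
              exact Finset.sum_le_sum (fun A hA => hc A (hDF hA))
        _ = D.card * (w + 1) := by rw [Finset.sum_const, smul_eq_mul]
        _ ≤ (t - 1) * (w + 1) := by
              have : D.card ≤ t - 1 := by omega
              exact Nat.mul_le_mul_right _ this
      -- every nonempty member of F meets U
      have hmeet : ∀ A ∈ F, A ≠ ∅ → (A ∩ U).Nonempty := by
        intro A hAF hAne
        by_contra hcon
        rw [not_nonempty_iff_eq_empty] at hcon
        have hAD : A ∉ D := by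
          intro hAD
          have : A ⊆ U := Finset.le_sup (f := id) hAD
          have : A ∩ U = A := Finset.inter_eq_left.mpr this
          rw [hcon] at this
          exact hAne this.symm
        have hins : insert A D ∈ 𝒟 := by
          simp only [h𝒟, mem_filter, mem_powerset]
          refine ⟨insert_subset hAF hDF, ?_, ?_⟩
          · intro B hB
            rcases mem_insert.mp hB with rfl | hB
            · exact hAne
            · exact hDne B hB
          · have hAdisj : ∀ B ∈ D, A ∩ B = ∅ := by
              intro B hB
              have hBU : B ⊆ U := Finset.le_sup (f := id) hB
              have hsub2 : A ∩ B ⊆ A ∩ U := inter_subset_inter (Finset.Subset.refl A) hBU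
              rw [hcon] at hsub2
              exact subset_empty.mp hsub2
            intro B hB C hC hBC
            rcases mem_insert.mp hB with hB' | hB'
            · rcases mem_insert.mp hC with hC' | hC'
              · exact absurd (hB'.trans hC'.symm) hBC
              · subst hB'; exact hAdisj C hC'
            · rcases mem_insert.mp hC with hC' | hC'
              · subst hC'; rw [inter_comm]; exact hAdisj B hB'
              · exact hDdisj B hB' C hC' hBC
        have := hDmax _ hins
        rw [card_insert_of_notMem hAD] at this
        omega
      -- pigeonhole: some x in U lies in many members
      have hUx : ∃ x ∈ U, w.factorial * t ^ w < (F.filter (fun A => x ∈ A)).card := by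
        by_contra hcon
        push_neg at hcon
        have hsub : F.erase ∅ ⊆ U.biUnion (fun x => F.filter (fun A => x ∈ A)) := by
          intro A hA
          rw [mem_erase] at hA
          obtain ⟨x, hx⟩ := hmeet A hA.2 hA.1
          rw [mem_inter] at hx
          exact mem_biUnion.mpr ⟨x, hx.2, mem_filter.mpr ⟨hA.2, hx.1⟩⟩
        have h1 : (F.erase ∅).card ≤ U.card * (w.factorial * t ^ w) := by
          calc (F.erase ∅).card ≤ (U.biUnion (fun x => F.filter (fun A => x ∈ A))).card :=
                card_le_card hsub
          _ ≤ ∑ x ∈ U, (F.filter (fun A => x ∈ A)).card := card_biUnion_le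
          _ ≤ ∑ _x ∈ U, (w.factorial * t ^ w) := Finset.sum_le_sum (fun x hx => hcon x hx)
          _ = U.card * (w.factorial * t ^ w) := by rw [Finset.sum_const, smul_eq_mul]
        have h2 : F.card ≤ (F.erase ∅).card + 1 := by
          by_cases h : (∅ : Finset ℕ) ∈ F
          · rw [card_erase_of_mem h]; omega
          · rw [erase_eq_of_notMem h]; omega
        have h3 : U.card * (w.factorial * t ^ w) ≤ (t-1) * (w+1) * (w.factorial * t ^ w) :=
          Nat.mul_le_mul_right _ hUcard
        have h4 : (t-1) * (w+1) * (w.factorial * t ^ w) + 1 ≤ (w+1).factorial * t ^ (w+1) := by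
          have e1 : (w+1).factorial = (w+1) * w.factorial := Nat.factorial_succ w
          have e2 : t ^ (w+1) = t * t ^ w := pow_succ' t w
          have hpos : 1 ≤ (w+1) * w.factorial * t ^ w :=
            Nat.one_le_iff_ne_zero.mpr (by positivity)
          obtain ⟨s, rfl⟩ : ∃ s, t = s + 1 := ⟨t - 1, by omega⟩
          simp only [Nat.add_sub_cancel] at *
          rw [e1, e2]
          nlinarith [hpos]
        omega
      obtain ⟨x, hxU, hx⟩ := hUx
      set G := F.filter (fun A => x ∈ A) with hG
      set H := G.image (fun A => A.erase x) with hH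
      have hGx : ∀ A ∈ G, x ∈ A := fun A hA => (mem_filter.mp hA).2
      have hHcard : H.card = G.card := by
        rw [hH]
        apply Finset.card_image_of_injOn
        intro A hA B hB hAB
        have h' : insert x (A.erase x) = insert x (B.erase x) := congrArg (insert x) hAB
        rwa [insert_erase (hGx A hA), insert_erase (hGx B hB)] at h'
      have hHc : ∀ B ∈ H, B.card ≤ w := by
        intro B hB
        obtain ⟨A, hA, rfl⟩ := mem_image.mp hB
        rw [card_erase_of_mem (hGx A hA)]
        have := hc A (filter_subset _ _ hA)
        omega
      have hHlt : w.factorial * t ^ w < H.card := by rw [hHcard]; exact hx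
      obtain ⟨P', hP'H, hP'card, Y', hY'⟩ := ih H hHc hHlt
      refine ⟨P'.image (insert x), ?_, ?_, insert x Y', ?_⟩
      · intro A hA
        obtain ⟨B, hB, rfl⟩ := mem_image.mp hA
        obtain ⟨C, hC, rfl⟩ := mem_image.mp (hP'H hB)
        rw [insert_erase (hGx C hC)]
        exact filter_subset _ _ hC
      · rw [← hP'card]
        apply Finset.card_image_of_injOn
        intro A hA B hB hAB
        have hxA : x ∉ A := by
          obtain ⟨C, hC, rfl⟩ := mem_image.mp (hP'H hA); exact notMem_erase x C
        have hxB : x ∉ B := by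
          obtain ⟨C, hC, rfl⟩ := mem_image.mp (hP'H hB); exact notMem_erase x C
        have h' : (insert x A).erase x = (insert x B).erase x := congrArg (·.erase x) hAB
        rwa [erase_insert hxA, erase_insert hxB] at h'
      · intro A hA B hB hAB
        obtain ⟨A', hA', rfl⟩ := mem_image.mp hA
        obtain ⟨B', hB', rfl⟩ := mem_image.mp hB
        have hne' : A' ≠ B' := fun h => hAB (by rw [h])
        rw [← Finset.insert_inter_distrib, hY' A' hA' B' hB' hne']

lemma mem_interPts_of {𝒜 : Finset (Finset ℕ)} {x : ℕ} {A B : Finset ℕ}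
    (hA : A ∈ 𝒜) (hB : B ∈ 𝒜) (h : A ∩ B = {x}) : x ∈ interPts 𝒜 := by
  have h1 : ({x} : Finset ℕ) ∈ interk 𝒜 1 := by
    unfold interk
    rw [mem_filter, mem_image]
    exact ⟨⟨(A, B), mem_product.mpr ⟨hA, hB⟩, h⟩, card_singleton x⟩
  exact (Finset.le_sup (f := id) h1) (mem_singleton_self x)

lemma interPts_mem {𝒜 : Finset (Finset ℕ)} {x : ℕ} (hx : x ∈ interPts 𝒜) :
    ∃ A B, A ∈ 𝒜 ∧ B ∈ 𝒜 ∧ A ∩ B = {x} := by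
  unfold interPts at hx
  rw [Finset.sup_eq_biUnion, mem_biUnion] at hx
  obtain ⟨C, hC, hxC⟩ := hx
  unfold interk at hC
  rw [mem_filter, mem_image] at hC
  obtain ⟨⟨⟨A, B⟩, hAB, hCint⟩, hc1⟩ := hC
  rw [mem_product] at hAB
  have hCx : C = {x} := by
    rw [card_eq_one] at hc1
    obtain ⟨a, rfl⟩ := hc1
    simp only [id_eq, mem_singleton] at hxC
    subst hxC; rfl
  exact ⟨A, B, hAB.1, hAB.2, by rw [hCint, hCx]⟩

lemma card_eq_r {n r : ℕ} {𝒜 : Finset (Finset ℕ)} (h𝒜 : 𝒜 ⊆ ksets n r) :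
    ∀ A ∈ 𝒜, A.card = r := fun A hA => (Finset.mem_powersetCard.mp (h𝒜 hA)).2

/-- Lovász-type uniform bound on the number of singleton intersection points. -/
lemma lovasz_bound {n r : ℕ} (hr : 1 ≤ r) {𝒜 : Finset (Finset ℕ)}
    (h𝒜 : 𝒜 ⊆ ksets n r) (hint : IsIntersecting 𝒜) :
    (interPts 𝒜).card ≤ r * (r.factorial * (r + 2) ^ r) := by
  classical
  by_contra hbig
  push_neg at hbig
  set X := interPts 𝒜 with hX
  have hwit : ∀ x ∈ X, ∃ A B, A ∈ 𝒜 ∧ B ∈ 𝒜 ∧ A ∩ B = {x} := fun x hx => interPts_mem hx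
  choose fA fB hfA hfB hfint using hwit
  set W := X.attach.image (fun x => fA x.1 x.2) with hW
  have hWsub : ∀ A ∈ W, A ∈ 𝒜 := by
    intro A hA
    obtain ⟨x, _, rfl⟩ := mem_image.mp hA
    exact hfA x.1 x.2
  have hxmem : ∀ (x : ℕ) (hx : x ∈ X), x ∈ fA x hx := by
    intro x hx
    have := hfint x hx
    have : x ∈ fA x hx ∩ fB x hx := by rw [this]; exact mem_singleton_self x
    exact (mem_inter.mp this).1
  -- each fiber of x ↦ fA x has size at most r
  have hXW : X.card ≤ r * W.card := by
    rw [hW]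
    have hfib : ∀ A ∈ X.attach.image (fun x : {x // x ∈ X} => fA x.1 x.2),
        (X.attach.filter (fun x : {x // x ∈ X} => fA x.1 x.2 = A)).card ≤ r := by
      intro A hA
      obtain ⟨x0, _, rfl⟩ := mem_image.mp hA
      have hcardA : (fA x0.1 x0.2).card = r := card_eq_r h𝒜 _ (hfA x0.1 x0.2)
      rw [← hcardA]
      apply Finset.card_le_card_of_injOn (fun x => x.1)
      · intro x hx
        rw [Finset.mem_coe, mem_filter] at hx
        have := hxmem x.1 x.2
        rwa [hx.2] at this
      · intro a _ b _ hab
        exact Subtype.ext hab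
    have := Finset.card_le_mul_card_image X.attach r hfib
    rwa [card_attach] at this
  have hWbig : r.factorial * (r + 2) ^ r < W.card := by
    by_contra hcon
    push_neg at hcon
    have := Nat.mul_le_mul_left r hcon
    omega
  have hWcards : ∀ A ∈ W, A.card ≤ r := fun A hA => le_of_eq (card_eq_r h𝒜 A (hWsub A hA))
  obtain ⟨P, hPW, hPcard, Y, hY⟩ := sunflower_lemma (r + 2) (by omega) r W hWcards hWbig
  -- basic facts about the sunflower
  have hP𝒜 : ∀ A ∈ P, A ∈ 𝒜 := fun A hA => hWsub A (hPW hA)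
  have h2 : ∀ A ∈ P, ∃ B ∈ P, B ≠ A := by
    intro A hA
    have h1lt : 1 < P.card := by omega
    exact Finset.exists_mem_ne h1lt A
  have hYsub : ∀ A ∈ P, Y ⊆ A := by
    intro A hA
    obtain ⟨B, hB, hBA⟩ := h2 A hA
    rw [← hY A hA B hB (fun h => hBA h.symm)]
    exact inter_subset_left
  have hYne : ∀ A ∈ P, Y ≠ A := by
    intro A hA hYA
    obtain ⟨B, hB, hBA⟩ := h2 A hA
    have hAB : A ∩ B = Y := hY A hA B hB (fun h => hBA h.symm)
    have : A ⊆ B := by rw [← hYA]; rw [← hAB] at hYA ⊢; exact inter_subset_right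
    have : A = B := Finset.eq_of_subset_of_card_le this
      (le_of_eq ((card_eq_r h𝒜 B (hP𝒜 B hB)).trans (card_eq_r h𝒜 A (hP𝒜 A hA)).symm))
    exact hBA this.symm
  have hYcard : Y.card < r := by
    have hPne : P.Nonempty := by rw [← card_pos]; omega
    obtain ⟨A, hA⟩ := hPne
    have : Y ⊂ A := Finset.ssubset_iff_subset_ne.mpr ⟨hYsub A hA, hYne A hA⟩
    have := Finset.card_lt_card this
    rw [card_eq_r h𝒜 A (hP𝒜 A hA)] at this
    exact this
  -- choose an origin point for each petal
  have horig : ∀ A ∈ P, ∃ x : {x // x ∈ X}, fA x.1 x.2 = A := by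
    intro A hA
    obtain ⟨x, hx, hfx⟩ := mem_image.mp (hPW hA)
    exact ⟨x, hfx⟩
  choose g hg using horig
  -- each origin point lies in the core Y
  have hgY : ∀ A (hA : A ∈ P), (g A hA).1 ∈ Y := by
    intro A hA
    by_contra hxY
    set x := (g A hA).1 with hxdef
    set B' := fB x (g A hA).2 with hB'
    have hB'𝒜 : B' ∈ 𝒜 := hfB _ _
    have hABx : A ∩ B' = {x} := by rw [← hg A hA]; exact hfint _ _
    -- B' meets every other petal outside of Y
    have hmeets : ∀ C ∈ P.erase A, ∃ z, z ∈ B' ∧ z ∈ C ∧ z ∉ Y := by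
      intro C hC
      rw [mem_erase] at hC
      obtain ⟨z, hz⟩ := hint C (hP𝒜 C hC.2) B' hB'𝒜
      rw [mem_inter] at hz
      refine ⟨z, hz.2, hz.1, fun hzY => ?_⟩
      have hzA : z ∈ A := hYsub A hA hzY
      have : z ∈ A ∩ B' := mem_inter.mpr ⟨hzA, hz.2⟩
      rw [hABx, mem_singleton] at this
      subst this
      exact hxY hzY
    choose h hhB hhC hhY using hmeets
    have hinj : Set.InjOn (fun C => if hC : C ∈ P.erase A then h C hC else 0) (P.erase A) := by
      intro C1 hC1 C2 hC2 heq
      simp only [Finset.mem_coe] at hC1 hC2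
      simp only [dif_pos hC1, dif_pos hC2] at heq
      by_contra hne
      have hz1 : h C1 hC1 ∈ C1 ∩ C2 := by
        rw [mem_inter]
        exact ⟨hhC C1 hC1, heq ▸ hhC C2 hC2⟩
      rw [hY C1 (mem_of_mem_erase hC1) C2 (mem_of_mem_erase hC2) hne] at hz1
      exact hhY C1 hC1 hz1
    have hcard_le : (P.erase A).card ≤ B'.card := by
      apply Finset.card_le_card_of_injOn _ _ hinj
      intro C hC
      simp only [Finset.mem_coe] at hC ⊢
      rw [dif_pos hC]
      exact hhB C hC
    rw [card_erase_of_mem hA, hPcard, card_eq_r h𝒜 B' hB'𝒜] at hcard_le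
    omega
  -- the map A ↦ g A is injective into Y
  have hfinal : P.card ≤ Y.card := by
    apply Finset.card_le_card_of_injOn
      (fun A => if hA : A ∈ P then (g A hA).1 else 0)
    · intro A hA
      simp only [Finset.mem_coe] at hA ⊢
      rw [dif_pos hA]
      exact hgY A hA
    · intro A1 hA1 A2 hA2 heq
      simp only [Finset.mem_coe] at hA1 hA2
      simp only [dif_pos hA1, dif_pos hA2] at heq
      have e1 : fA (g A1 hA1).1 (g A1 hA1).2 = A1 := hg A1 hA1
      have e2 : fA (g A2 hA2).1 (g A2 hA2).2 = A2 := hg A2 hA2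
      rw [← e1, ← e2]
      exact congrArg (fun y : {x // x ∈ X} => fA y.1 y.2) (Subtype.ext heq)
  omega

lemma interk_one_card_le (𝒜 : Finset (Finset ℕ)) :
    (interk 𝒜 1).card ≤ (interPts 𝒜).card := by
  classical
  apply Finset.card_le_card_of_injOn (fun C => C.sup id)
  · intro C hC
    obtain ⟨a, rfl⟩ := Finset.card_eq_one.mp (mem_filter.mp hC).2
    have : ({a} : Finset ℕ).sup id = a := Finset.sup_singleton
    simp only [Finset.mem_coe]
    rw [this]
    exact (Finset.le_sup (f := id) hC) (mem_singleton_self a)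
  · intro C1 h1 C2 h2 heq
    obtain ⟨a, rfl⟩ := Finset.card_eq_one.mp (mem_filter.mp h1).2
    obtain ⟨b, rfl⟩ := Finset.card_eq_one.mp (mem_filter.mp h2).2
    have heq' : ({a} : Finset ℕ).sup id = ({b} : Finset ℕ).sup id := heq
    rw [Finset.sup_singleton, Finset.sup_singleton] at heq'
    simp only [id_eq] at heq'
    rw [heq']

lemma interPts_card_le (𝒜 : Finset (Finset ℕ)) :
    (interPts 𝒜).card ≤ (interk 𝒜 1).card := by
  rw [interPts, Finset.sup_eq_biUnion]
  calc ((interk 𝒜 1).biUnion id).card ≤ ∑ C ∈ interk 𝒜 1, (id C).card :=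
        card_biUnion_le
  _ = ∑ _C ∈ interk 𝒜 1, 1 :=
        Finset.sum_congr rfl (fun C hC => (mem_filter.mp hC).2)
  _ = (interk 𝒜 1).card := by rw [Finset.sum_const, smul_eq_mul, mul_one]

lemma interk_empty : interk ∅ 1 = ∅ := by
  simp [interk]

lemma isIntersecting_empty : IsIntersecting ∅ :=
  fun A hA _ _ => absurd hA (notMem_empty A)

def gnd (k : ℕ) : Finset ℕ := Finset.Icc 1 (2 * k)
noncomputable def enc : Finset ℕ → ℕ := Encodable.encode
def cmpl (k : ℕ) (S : Finset ℕ) : Finset ℕ := gnd k \ S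
noncomputable def qq (k : ℕ) (S : Finset ℕ) : ℕ := min (enc S) (enc (cmpl k S))
noncomputable def off (k : ℕ) (S : Finset ℕ) : ℕ := 2 * k + 4 * qq k S
noncomputable def w1 (k : ℕ) (S : Finset ℕ) : Finset ℕ :=
  if enc S < enc (cmpl k S) then {off k S + 1, off k S + 2} else {off k S + 1, off k S + 3}
noncomputable def w2 (k : ℕ) (S : Finset ℕ) : Finset ℕ :=
  if enc S < enc (cmpl k S) then {off k S + 3, off k S + 4} else {off k S + 2, off k S + 4}
noncomputable def asg (k : ℕ) (S : Finset ℕ) : Finset ℕ :=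
  if enc S < enc (cmpl k S) then {off k S + 1, off k S + 2} else {off k S + 3, off k S + 4}
def pc (k : ℕ) : Finset (Finset ℕ) := Finset.powersetCard k (gnd k)
noncomputable def fam (k : ℕ) : Finset (Finset ℕ) :=
  (pc k).biUnion (fun S => {S ∪ w1 k S, S ∪ w2 k S})

section facts
variable {k : ℕ} {S T : Finset ℕ}

lemma gnd_card : (gnd k).card = 2 * k := by simp [gnd]

lemma pc_mem (hS : S ∈ pc k) : S ⊆ gnd k ∧ S.card = k := Finset.mem_powersetCard.mp hS

lemma cmpl_mem (hS : S ∈ pc k) : cmpl k S ∈ pc k := by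
  obtain ⟨h1, h2⟩ := pc_mem hS
  refine Finset.mem_powersetCard.mpr ⟨sdiff_subset, ?_⟩
  rw [cmpl, card_sdiff_of_subset h1, gnd_card, h2]; omega

lemma cmpl_cmpl (hS : S ∈ pc k) : cmpl k (cmpl k S) = S :=
  Finset.sdiff_sdiff_eq_self (pc_mem hS).1

lemma cmpl_disj (hS : S ∈ pc k) : S ∩ cmpl k S = ∅ := by
  rw [cmpl]; exact inter_sdiff_self S (gnd k)

lemma cmpl_ne (hk : 1 ≤ k) (hS : S ∈ pc k) : S ≠ cmpl k S := by
  intro h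
  have hne : S.Nonempty := by rw [← card_pos, (pc_mem hS).2]; omega
  obtain ⟨x, hx⟩ := hne
  have : x ∈ S ∩ cmpl k S := mem_inter.mpr ⟨hx, h ▸ hx⟩
  rw [cmpl_disj hS] at this
  exact notMem_empty x this

lemma enc_ne (hk : 1 ≤ k) (hS : S ∈ pc k) : enc S ≠ enc (cmpl k S) :=
  fun h => cmpl_ne hk hS (Encodable.encode_injective h)

lemma qq_cmpl (hS : S ∈ pc k) : qq k (cmpl k S) = qq k S := by
  rw [qq, qq, cmpl_cmpl hS, min_comm]

lemma off_cmpl (hS : S ∈ pc k) : off k (cmpl k S) = off k S := by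
  rw [off, off, qq_cmpl hS]

lemma qq_eq_cases (hS : S ∈ pc k) (hT : T ∈ pc k) (h : qq k S = qq k T) :
    T = S ∨ T = cmpl k S := by
  rw [qq, qq] at h
  have h1 : min (enc S) (enc (cmpl k S)) = enc S ∨
      min (enc S) (enc (cmpl k S)) = enc (cmpl k S) := min_choice _ _
  have h2 : min (enc T) (enc (cmpl k T)) = enc T ∨
      min (enc T) (enc (cmpl k T)) = enc (cmpl k T) := min_choice _ _
  rcases h1 with h1 | h1 <;> rcases h2 with h2 | h2 <;> rw [h1] at h <;> rw [h2] at h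
  · exact Or.inl (Encodable.encode_injective h).symm
  · right
    have hST : S = cmpl k T := Encodable.encode_injective h
    have h2' : cmpl k S = T := by rw [hST, cmpl_cmpl hT]
    exact h2'.symm
  · exact Or.inr (Encodable.encode_injective h.symm)
  · have := Encodable.encode_injective h
    have : cmpl k (cmpl k S) = cmpl k (cmpl k T) := by rw [this]
    rw [cmpl_cmpl hS, cmpl_cmpl hT] at this
    exact Or.inl this.symm

lemma gnd_le (hS : S ∈ pc k) : ∀ x ∈ S, 1 ≤ x ∧ x ≤ 2 * k := by
  intro x hx
  have := (pc_mem hS).1 hx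
  rw [gnd, Finset.mem_Icc] at this
  exact this

lemma w1_range : ∀ v ∈ w1 k S, off k S < v ∧ v ≤ off k S + 4 := by
  intro v hv
  rw [w1] at hv
  split at hv <;> simp only [mem_insert, mem_singleton] at hv <;> omega

lemma w2_range : ∀ v ∈ w2 k S, off k S < v ∧ v ≤ off k S + 4 := by
  intro v hv
  rw [w2] at hv
  split at hv <;> simp only [mem_insert, mem_singleton] at hv <;> omega

lemma asg_range : ∀ v ∈ asg k S, off k S < v ∧ v ≤ off k S + 4 := by
  intro v hv
  rw [asg] at hv
  split at hv <;> simp only [mem_insert, mem_singleton] at hv <;> omega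

lemma off_ge : 2 * k ≤ off k S := by rw [off]; omega

/-- generic computation of intersections of "base ∪ window" sets -/
lemma union_inter_union {S T WS WT : Finset ℕ} {m : ℕ} (hS : ∀ x ∈ S, x ≤ m)
    (hT : ∀ x ∈ T, x ≤ m) (hWS : ∀ x ∈ WS, m < x) (hWT : ∀ x ∈ WT, m < x) :
    (S ∪ WS) ∩ (T ∪ WT) = (S ∩ T) ∪ (WS ∩ WT) := by
  ext v
  simp only [mem_inter, mem_union]
  constructor
  · rintro ⟨hv1 | hv1, hv2 | hv2⟩
    · exact Or.inl ⟨hv1, hv2⟩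
    · exact absurd (hWT v hv2) (not_lt.mpr (hS v hv1))
    · exact absurd (hWS v hv1) (not_lt.mpr (hT v hv2))
    · exact Or.inr ⟨hv1, hv2⟩
  · rintro (⟨h1, h2⟩ | ⟨h1, h2⟩)
    · exact ⟨Or.inl h1, Or.inl h2⟩
    · exact ⟨Or.inr h1, Or.inr h2⟩

lemma base_le (hS : S ∈ pc k) : ∀ x ∈ S, x ≤ 2 * k := fun x hx => (gnd_le hS x hx).2

lemma w1_gt : ∀ x ∈ w1 k S, 2 * k < x := by
  intro x hx; have := w1_range x hx; have := off_ge (k := k) (S := S); omega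

lemma w2_gt : ∀ x ∈ w2 k S, 2 * k < x := by
  intro x hx; have := w2_range x hx; have := off_ge (k := k) (S := S); omega

lemma asg_gt : ∀ x ∈ asg k S, 2 * k < x := by
  intro x hx; have := asg_range x hx; have := off_ge (k := k) (S := S); omega

/-- windows with distinct q-values are disjoint -/
lemma win_disj (hq : qq k S ≠ qq k T) {v : ℕ}
    (hvS : off k S < v ∧ v ≤ off k S + 4) (hvT : off k T < v ∧ v ≤ off k T + 4) : False := by
  rw [off] at hvS hvT
  omega

end facts

section facts2
variable {k : ℕ} {S T : Finset ℕ}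

lemma cmpl_of_disj (hS : S ∈ pc k) (hT : T ∈ pc k) (h : S ∩ T = ∅) : T = cmpl k S := by
  have hTsub : T ⊆ cmpl k S := by
    intro x hx
    rw [cmpl, mem_sdiff]
    refine ⟨(pc_mem hT).1 hx, fun hxS => ?_⟩
    have : x ∈ S ∩ T := mem_inter.mpr ⟨hxS, hx⟩
    rw [h] at this
    exact notMem_empty x this
  apply Finset.eq_of_subset_of_card_le hTsub
  rw [(pc_mem (cmpl_mem hS)).2, (pc_mem hT).2]

lemma inter_nonempty_of_qq_ne (hS : S ∈ pc k) (hT : T ∈ pc k) (h : qq k S ≠ qq k T) :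
    (S ∩ T).Nonempty := by
  rw [nonempty_iff_ne_empty]
  intro hcon
  have := cmpl_of_disj hS hT hcon
  subst this
  exact h (qq_cmpl hS).symm

/-- the four pairwise intersections within a complementary pair -/
lemma pair_inter (hk : 1 ≤ k) (hS : S ∈ pc k) (hlt : enc S < enc (cmpl k S)) :
    (S ∪ w1 k S) ∩ (cmpl k S ∪ w1 k (cmpl k S)) = {off k S + 1} ∧
    (S ∪ w1 k S) ∩ (cmpl k S ∪ w2 k (cmpl k S)) = {off k S + 2} ∧
    (S ∪ w2 k S) ∩ (cmpl k S ∪ w1 k (cmpl k S)) = {off k S + 3} ∧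
    (S ∪ w2 k S) ∩ (cmpl k S ∪ w2 k (cmpl k S)) = {off k S + 4} := by
  have hT : cmpl k S ∈ pc k := cmpl_mem hS
  have hnlt : ¬ enc (cmpl k S) < enc (cmpl k (cmpl k S)) := by
    rw [cmpl_cmpl hS]; omega
  have hoff : off k (cmpl k S) = off k S := off_cmpl hS
  have hdisj : S ∩ cmpl k S = ∅ := cmpl_disj hS
  have e1 : w1 k S = {off k S + 1, off k S + 2} := by rw [w1, if_pos hlt]
  have e2 : w2 k S = {off k S + 3, off k S + 4} := by rw [w2, if_pos hlt]
  have e3 : w1 k (cmpl k S) = {off k S + 1, off k S + 3} := by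
    rw [w1, if_neg hnlt, hoff]
  have e4 : w2 k (cmpl k S) = {off k S + 2, off k S + 4} := by
    rw [w2, if_neg hnlt, hoff]
  have u1 : (S ∪ w1 k S) ∩ (cmpl k S ∪ w1 k (cmpl k S)) = w1 k S ∩ w1 k (cmpl k S) := by
    rw [union_inter_union (base_le hS) (base_le hT) w1_gt w1_gt, hdisj, empty_union]
  have u2 : (S ∪ w1 k S) ∩ (cmpl k S ∪ w2 k (cmpl k S)) = w1 k S ∩ w2 k (cmpl k S) := by
    rw [union_inter_union (base_le hS) (base_le hT) w1_gt w2_gt, hdisj, empty_union]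
  have u3 : (S ∪ w2 k S) ∩ (cmpl k S ∪ w1 k (cmpl k S)) = w2 k S ∩ w1 k (cmpl k S) := by
    rw [union_inter_union (base_le hS) (base_le hT) w2_gt w1_gt, hdisj, empty_union]
  have u4 : (S ∪ w2 k S) ∩ (cmpl k S ∪ w2 k (cmpl k S)) = w2 k S ∩ w2 k (cmpl k S) := by
    rw [union_inter_union (base_le hS) (base_le hT) w2_gt w2_gt, hdisj, empty_union]
  refine ⟨?_, ?_, ?_, ?_⟩
  · rw [u1, e1, e3]; ext v
    simp only [mem_inter, mem_insert, mem_singleton]; omega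
  · rw [u2, e1, e4]; ext v
    simp only [mem_inter, mem_insert, mem_singleton]; omega
  · rw [u3, e2, e3]; ext v
    simp only [mem_inter, mem_insert, mem_singleton]; omega
  · rw [u4, e2, e4]; ext v
    simp only [mem_inter, mem_insert, mem_singleton]; omega


lemma mem_fam1 {k : ℕ} {S : Finset ℕ} (hS : S ∈ pc k) : S ∪ w1 k S ∈ fam k := by
  rw [fam, mem_biUnion]
  exact ⟨S, hS, by simp⟩

lemma mem_fam2 {k : ℕ} {S : Finset ℕ} (hS : S ∈ pc k) : S ∪ w2 k S ∈ fam k := by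
  rw [fam, mem_biUnion]
  exact ⟨S, hS, by simp⟩

lemma fam_mem_iff {k : ℕ} {A : Finset ℕ} (hA : A ∈ fam k) :
    ∃ S ∈ pc k, A = S ∪ w1 k S ∨ A = S ∪ w2 k S := by
  rw [fam, mem_biUnion] at hA
  obtain ⟨S, hS, hmem⟩ := hA
  rw [mem_insert, mem_singleton] at hmem
  exact ⟨S, hS, hmem⟩

lemma fam_intersecting {k : ℕ} (hk : 1 ≤ k) : IsIntersecting (fam k) := by
  intro A hA B hB
  obtain ⟨S, hS, hAe⟩ := fam_mem_iff hA
  obtain ⟨T, hT, hBe⟩ := fam_mem_iff hB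
  by_cases hq : qq k S = qq k T
  · rcases qq_eq_cases hS hT hq with h | h
    · -- same base set
      have hne : S.Nonempty := by rw [← card_pos, (pc_mem hS).2]; omega
      obtain ⟨x, hx⟩ := hne
      rw [h] at hBe
      have hxA : x ∈ A := by rcases hAe with rfl | rfl <;> exact mem_union_left _ hx
      have hxB : x ∈ B := by rcases hBe with rfl | rfl <;> exact mem_union_left _ hx
      exact ⟨x, mem_inter.mpr ⟨hxA, hxB⟩⟩
    · -- complementary pair
      rw [h] at hBe
      by_cases hlt : enc S < enc (cmpl k S)
      · obtain ⟨p1, p2, p3, p4⟩ := pair_inter hk hS hlt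
        rcases hAe with rfl | rfl <;> rcases hBe with rfl | rfl
        · rw [p1]; exact singleton_nonempty _
        · rw [p2]; exact singleton_nonempty _
        · rw [p3]; exact singleton_nonempty _
        · rw [p4]; exact singleton_nonempty _
      · have hlt' : enc (cmpl k S) < enc (cmpl k (cmpl k S)) := by
          rw [cmpl_cmpl hS]
          exact lt_of_le_of_ne (not_lt.mp hlt) (enc_ne hk hS).symm
        obtain ⟨p1, p2, p3, p4⟩ := pair_inter hk (cmpl_mem hS) hlt'
        rw [cmpl_cmpl hS] at p1 p2 p3 p4
        rcases hAe with rfl | rfl <;> rcases hBe with rfl | rfl <;> rw [inter_comm]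
        · rw [p1]; exact singleton_nonempty _
        · rw [p3]; exact singleton_nonempty _
        · rw [p2]; exact singleton_nonempty _
        · rw [p4]; exact singleton_nonempty _
  · obtain ⟨x, hx⟩ := inter_nonempty_of_qq_ne hS hT hq
    rw [mem_inter] at hx
    have hxA : x ∈ A := by rcases hAe with rfl | rfl <;> exact mem_union_left _ hx.1
    have hxB : x ∈ B := by rcases hBe with rfl | rfl <;> exact mem_union_left _ hx.2
    exact ⟨x, mem_inter.mpr ⟨hxA, hxB⟩⟩

/-- all four new vertices of each pair, in particular the two assigned ones,
are singleton intersection points -/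
lemma asg_mem_interPts {k : ℕ} (hk : 1 ≤ k) {S : Finset ℕ} (hS : S ∈ pc k) :
    ∀ v ∈ asg k S, v ∈ interPts (fam k) := by
  intro v hv
  by_cases hlt : enc S < enc (cmpl k S)
  · rw [asg, if_pos hlt, mem_insert, mem_singleton] at hv
    obtain ⟨p1, p2, _, _⟩ := pair_inter hk hS hlt
    rcases hv with rfl | rfl
    · exact mem_interPts_of (mem_fam1 hS) (mem_fam1 (cmpl_mem hS)) p1
    · exact mem_interPts_of (mem_fam1 hS) (mem_fam2 (cmpl_mem hS)) p2
  · rw [asg, if_neg hlt, mem_insert, mem_singleton] at hv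
    have hlt' : enc (cmpl k S) < enc (cmpl k (cmpl k S)) := by
      rw [cmpl_cmpl hS]
      exact lt_of_le_of_ne (not_lt.mp hlt) (enc_ne hk hS).symm
    obtain ⟨_, _, p3, p4⟩ := pair_inter hk (cmpl_mem hS) hlt'
    rw [cmpl_cmpl hS] at p3 p4
    rw [off_cmpl hS] at p3 p4
    rcases hv with rfl | rfl
    · exact mem_interPts_of (mem_fam2 (cmpl_mem hS)) (mem_fam1 hS) p3
    · exact mem_interPts_of (mem_fam2 (cmpl_mem hS)) (mem_fam2 hS) p4

lemma ground_mem_interPts {k : ℕ} (hk : 2 ≤ k) :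
    ∀ x ∈ gnd k, x ∈ interPts (fam k) := by
  intro x hx
  -- build two k-subsets meeting exactly in x
  have hxcard : ((gnd k).erase x).card = 2 * k - 1 := by
    rw [card_erase_of_mem hx, gnd_card]
  obtain ⟨S', hS'sub, hS'card⟩ :=
    Finset.exists_subset_card_eq (show k - 1 ≤ ((gnd k).erase x).card by omega)
  have hrest : (((gnd k).erase x) \ S').card = k := by
    rw [card_sdiff_of_subset hS'sub, hxcard, hS'card]; omega
  obtain ⟨T', hT'sub, hT'card⟩ :=
    Finset.exists_subset_card_eq (show k - 1 ≤ (((gnd k).erase x) \ S').card by omega)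
  have hxS' : x ∉ S' := fun h => (notMem_erase x _) (hS'sub h)
  have hxT' : x ∉ T' := fun h => (notMem_erase x _) ((sdiff_subset) (hT'sub h))
  set S := insert x S' with hSdef
  set T := insert x T' with hTdef
  have hS : S ∈ pc k := by
    refine Finset.mem_powersetCard.mpr ⟨?_, ?_⟩
    · exact insert_subset hx ((hS'sub).trans (erase_subset x _))
    · rw [card_insert_of_notMem hxS', hS'card]; omega
  have hT : T ∈ pc k := by
    refine Finset.mem_powersetCard.mpr ⟨?_, ?_⟩
    · exact insert_subset hx ((hT'sub.trans sdiff_subset).trans (erase_subset x _))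
    · rw [card_insert_of_notMem hxT', hT'card]; omega
  have hST : S ∩ T = {x} := by
    rw [hSdef, hTdef, ← Finset.insert_inter_distrib]
    have : S' ∩ T' = ∅ := by
      rw [← Finset.disjoint_iff_inter_eq_empty]
      exact Finset.disjoint_left.mpr (fun a ha haT =>
        (mem_sdiff.mp (hT'sub haT)).2 ha)
    rw [this]
    rfl
  have hq : qq k S ≠ qq k T := by
    intro hq
    rcases qq_eq_cases hS hT hq with h | h
    · rw [h, inter_self] at hST
      have hkc := (pc_mem hS).2
      rw [hST, card_singleton] at hkc
      omega
    · rw [h] at hST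
      have hxx : x ∈ S ∩ cmpl k S := by rw [hST]; exact mem_singleton_self x
      rw [cmpl_disj hS] at hxx
      exact notMem_empty x hxx
  have hw : w1 k S ∩ w1 k T = ∅ := by
    rw [← Finset.disjoint_iff_inter_eq_empty]
    refine Finset.disjoint_left.mpr (fun v hvS hvT => ?_)
    exact win_disj hq (w1_range v hvS) (w1_range v hvT)
  have hfin : (S ∪ w1 k S) ∩ (T ∪ w1 k T) = {x} := by
    rw [union_inter_union (base_le hS) (base_le hT) w1_gt w1_gt, hw, union_empty, hST]
  exact mem_interPts_of (mem_fam1 hS) (mem_fam1 hT) hfin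

lemma asg_card {k : ℕ} {S : Finset ℕ} : (asg k S).card = 2 := by
  rw [asg]
  split <;> rw [card_insert_of_notMem (by simp), card_singleton]

lemma asg_pairwise_disj {k : ℕ} (hk : 1 ≤ k) {S T : Finset ℕ} (hS : S ∈ pc k)
    (hT : T ∈ pc k) (hST : S ≠ T) : Disjoint (asg k S) (asg k T) := by
  refine Finset.disjoint_left.mpr (fun v hvS hvT => ?_)
  by_cases hq : qq k S = qq k T
  · rcases qq_eq_cases hS hT hq with h | h
    · exact hST h.symm
    · subst h
      have hoff := off_cmpl hS
      by_cases hlt : enc S < enc (cmpl k S)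
      · have hnlt : ¬ enc (cmpl k S) < enc (cmpl k (cmpl k S)) := by
          rw [cmpl_cmpl hS]; omega
        rw [asg, if_pos hlt, mem_insert, mem_singleton] at hvS
        rw [asg, if_neg hnlt, hoff, mem_insert, mem_singleton] at hvT
        omega
      · have hlt' : enc (cmpl k S) < enc (cmpl k (cmpl k S)) := by
          rw [cmpl_cmpl hS]
          exact lt_of_le_of_ne (not_lt.mp hlt) (enc_ne hk hS).symm
        rw [asg, if_neg hlt, mem_insert, mem_singleton] at hvS
        rw [asg, if_pos hlt', hoff, mem_insert, mem_singleton] at hvT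
        omega
  · exact win_disj hq (asg_range v hvS) (asg_range v hvT)

lemma pc_card {k : ℕ} : (pc k).card = (2 * k).choose k := by
  rw [pc, Finset.card_powersetCard, gnd_card]

lemma interPts_fam_card {k : ℕ} (hk : 2 ≤ k) :
    2 * k + 2 * ((2 * k).choose k) ≤ (interPts (fam k)).card := by
  have hk1 : 1 ≤ k := by omega
  set V := (pc k).biUnion (asg k) with hV
  have hVcard : V.card = 2 * ((2 * k).choose k) := by
    rw [hV, card_biUnion (fun S hS T hT hST => asg_pairwise_disj hk1 hS hT hST)]
    rw [Finset.sum_congr rfl (fun S _ => asg_card), Finset.sum_const, pc_card,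
      smul_eq_mul]
    ring
  have hsub : gnd k ∪ V ⊆ interPts (fam k) := by
    intro v hv
    rcases mem_union.mp hv with hv | hv
    · exact ground_mem_interPts hk v hv
    · obtain ⟨S, hS, hvS⟩ := mem_biUnion.mp hv
      exact asg_mem_interPts hk1 hS v hvS
  have hdisj : Disjoint (gnd k) V := by
    refine Finset.disjoint_left.mpr (fun v hv hvV => ?_)
    obtain ⟨S, hS, hvS⟩ := mem_biUnion.mp hvV
    have h1 := asg_gt v hvS
    have h2 := (Finset.mem_Icc.mp hv).2
    omega
  have := card_le_card hsub
  rw [card_union_of_disjoint hdisj, gnd_card, hVcard] at this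
  exact this

lemma w1_card {k : ℕ} {S : Finset ℕ} : (w1 k S).card = 2 := by
  rw [w1]; split <;> rw [card_insert_of_notMem (by simp), card_singleton]

lemma w2_card {k : ℕ} {S : Finset ℕ} : (w2 k S).card = 2 := by
  rw [w2]; split <;> rw [card_insert_of_notMem (by simp), card_singleton]

lemma fam_subset_ksets {k : ℕ} :
    fam k ⊆ ksets (2 * k + 4 * ((pc k).sup (qq k)) + 4) (k + 2) := by
  intro A hA
  obtain ⟨S, hS, hAe⟩ := fam_mem_iff hA
  set n := 2 * k + 4 * ((pc k).sup (qq k)) + 4 with hn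
  have hq : qq k S ≤ (pc k).sup (qq k) := Finset.le_sup hS
  have hgnd : ∀ x ∈ S, 1 ≤ x ∧ x ≤ n := by
    intro x hx
    have := gnd_le hS x hx
    omega
  have hwin : ∀ x, off k S < x → x ≤ off k S + 4 → 1 ≤ x ∧ x ≤ n := by
    intro x h1 h2
    rw [off] at h1 h2
    omega
  have hdisj1 : Disjoint S (w1 k S) := Finset.disjoint_left.mpr
    (fun x hx hxw => by
      have := w1_gt x hxw; have := gnd_le hS x hx; omega)
  have hdisj2 : Disjoint S (w2 k S) := Finset.disjoint_left.mpr
    (fun x hx hxw => by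
      have := w2_gt x hxw; have := gnd_le hS x hx; omega)
  refine Finset.mem_powersetCard.mpr ⟨?_, ?_⟩
  · intro x hx
    rw [grd, Finset.mem_Icc]
    rcases hAe with rfl | rfl <;> rcases mem_union.mp hx with hx | hx
    · exact hgnd x hx
    · exact hwin x (w1_range x hx).1 (w1_range x hx).2
    · exact hgnd x hx
    · exact hwin x (w2_range x hx).1 (w2_range x hx).2
  · rcases hAe with rfl | rfl
    · rw [card_union_of_disjoint hdisj1, (pc_mem hS).2, w1_card]
    · rw [card_union_of_disjoint hdisj2, (pc_mem hS).2, w2_card]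

/-- Tuza's lower bound: for `r ≥ 4` there is an intersecting family of `r`-sets with at least
`2·C(2r-4, r-2) + 2r - 4` singleton pairwise intersections; in particular
`α^(r) ≥ 2·C(2r-4, r-2) + 2r - 4`. -/
theorem stmt_10 (r : ℕ) (hr : 4 ≤ r) :
    (∃ n, r ≤ n ∧ ∃ 𝒜 ⊆ ksets n r, IsIntersecting 𝒜 ∧
      2 * (2 * r - 4).choose (r - 2) + 2 * r - 4 ≤ (interPts 𝒜).card) ∧
    2 * (2 * r - 4).choose (r - 2) + 2 * r - 4 ≤ alpha r := by
  classical
  set k := r - 2 with hkdef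
  have hk2 : 2 ≤ k := by omega
  have hrk : r = k + 2 := by omega
  set n := 2 * k + 4 * ((pc k).sup (qq k)) + 4 with hndef
  have hn : r ≤ n := by omega
  have hsub : fam k ⊆ ksets n r := by rw [hrk]; exact fam_subset_ksets
  have hint : IsIntersecting (fam k) := fam_intersecting (by omega)
  have hpts : 2 * (2 * r - 4).choose (r - 2) + 2 * r - 4 ≤ (interPts (fam k)).card := by
    have hcard := interPts_fam_card hk2
    have h24 : 2 * r - 4 = 2 * k := by omega
    have hr2 : r - 2 = k := hkdef.symm
    rw [h24, hr2]
    omega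
  refine ⟨⟨n, hn, fam k, hsub, hint, hpts⟩, ?_⟩
  -- the alpha bound
  set Bd := r * (r.factorial * (r + 2) ^ r) with hBd
  have hbeta_le : ∀ n', beta n' r 1 ≤ Bd := by
    intro n'
    apply csSup_le
    · exact ⟨0, ∅, Finset.empty_subset _, isIntersecting_empty, by rw [interk_empty]; rfl⟩
    · rintro m ⟨𝒜, h𝒜, hI, hm⟩
      rw [← hm]
      exact (interk_one_card_le 𝒜).trans (lovasz_bound (by omega) h𝒜 hI)
  have hbdd1 : BddAbove {m | ∃ 𝒜 ⊆ ksets n r, IsIntersecting 𝒜 ∧ (interk 𝒜 1).card = m} := by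
    refine ⟨Bd, ?_⟩
    rintro m ⟨𝒜, h𝒜, hI, hm⟩
    rw [← hm]
    exact (interk_one_card_le 𝒜).trans (lovasz_bound (by omega) h𝒜 hI)
  have h1 : 2 * (2 * r - 4).choose (r - 2) + 2 * r - 4 ≤ beta n r 1 := by
    refine le_trans (hpts.trans (interPts_card_le _)) ?_
    exact le_csSup hbdd1 ⟨fam k, hsub, hint, rfl⟩
  have hbdd2 : BddAbove {m | ∃ n', r ≤ n' ∧ beta n' r 1 = m} := by
    refine ⟨Bd, ?_⟩
    rintro m ⟨n', _, hm⟩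
    rw [← hm]
    exact hbeta_le n'
  exact h1.trans (le_csSup hbdd2 ⟨n, hn, rfl⟩)
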